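/- Let m and n be relatively prime positive integers, A = {a₁,...,a_m} and B = {b₁,...,b_n} sets of integers such that the sum set A + B = {aᵢ + bⱼ} is a complete set of representatives modulo mn. Then A is a complete set of residues modulo m and B is a complete set of residues modulo n. -/

import Mathlib

open Finset AddMonoidAlgebra

private instance myCharP (p N : ℕ) [Fact p.Prime] :
    CharP (AddMonoidAlgebra (ZMod p) (ZMod N)) p :=
  charP_of_injective_ringHom (R := ZMod p) (f := AddMonoidAlgebra.singleZeroRingHom)
    (fun a b h => Finsupp.single_injective (0 : ZMod N) (congrArg AddMonoidAlgebra.coeff h)) p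

private def cnt (N : ℕ) (A B : Finset ℤ) (k : ℕ) (t : ZMod N) : ℕ :=
  ((A ×ˢ B).filter
    (fun q : ℤ × ℤ => (((k : ℤ) * q.1 : ℤ) : ZMod N) + ((q.2 : ℤ) : ZMod N) = t)).card

private lemma coeff_eq (N : ℕ) (A B : Finset ℤ) (p k : ℕ) (t : ZMod N) :
    (((∑ a ∈ A, (single (((k : ℤ) * a : ℤ) : ZMod N) 1 : AddMonoidAlgebra (ZMod p) (ZMod N))) *
      (∑ b ∈ B, (single ((b : ℤ) : ZMod N) 1 : AddMonoidAlgebra (ZMod p) (ZMod N)))) :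
      AddMonoidAlgebra (ZMod p) (ZMod N)).coeff t = (cnt N A B k t : ZMod p) := by
  classical
  rw [Finset.sum_mul_sum]
  simp only [single_mul_single, one_mul]
  rw [← Finset.sum_product']
  rw [coeff_sum, Finset.sum_apply']
  simp only [coeff_single, Finsupp.single_apply]
  rw [Finset.sum_boole]
  rw [cnt]

private lemma cnt_sum (N : ℕ) [NeZero N] (A B : Finset ℤ) (k : ℕ) :
    ∑ t : ZMod N, cnt N A B k t = A.card * B.card := by
  classical
  rw [← Finset.card_product]
  exact (Finset.card_eq_sum_card_fiberwise (fun x _ => Finset.mem_univ _)).symm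

private lemma all_one {M : Type*} [Fintype M] (f : M → ℕ) (h1 : ∀ t, 1 ≤ f t)
    (h2 : ∑ t, f t = Fintype.card M) : ∀ t, f t = 1 := by
  by_contra hc
  push_neg at hc
  obtain ⟨t0, ht0⟩ := hc
  have h3 : 1 < f t0 := lt_of_le_of_ne (h1 t0) (Ne.symm ht0)
  have h4 : ∑ _t : M, (1 : ℕ) < ∑ t, f t :=
    Finset.sum_lt_sum (fun i _ => h1 i) ⟨t0, Finset.mem_univ _, h3⟩
  rw [h2] at h4
  simp [Finset.card_univ] at h4

private lemma step (N : ℕ) [NeZero N] (A B : Finset ℤ) (p k : ℕ) [hp : Fact p.Prime]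
    (hpm : ¬ p ∣ A.card) (hN : N = A.card * B.card)
    (h : ∀ t, cnt N A B k t = 1) : ∀ t, cnt N A B (p * k) t = 1 := by
  classical
  set R := AddMonoidAlgebra (ZMod p) (ZMod N) with hR
  set J : R := ∑ t : ZMod N, single t 1 with hJ
  set SA : R := ∑ a ∈ A, single (((k : ℤ) * a : ℤ) : ZMod N) 1 with hSA
  set SB : R := ∑ b ∈ B, single ((b : ℤ) : ZMod N) 1 with hSB
  have hJt : ∀ t : ZMod N, J.coeff t = 1 := by
    intro t
    rw [hJ, coeff_sum, Finset.sum_apply']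
    simp [coeff_single, Finsupp.single_apply]
  have hmulJ : ∀ g : ZMod N, (single g (1 : ZMod p) : R) * J = J := by
    intro g
    rw [hJ, Finset.mul_sum]
    simp only [single_mul_single, one_mul]
    exact Equiv.sum_comp (Equiv.addLeft g) (fun s => (single s 1 : R))
  have hSAJ : SA * J = (A.card : ZMod p) • J := by
    rw [hSA, Finset.sum_mul]
    simp only [hmulJ]
    rw [Finset.sum_const, Nat.cast_smul_eq_nsmul]
  have hSApow : ∀ j : ℕ, SA ^ j * J = ((A.card : ZMod p) ^ j) • J := by
    intro j
    induction j with
    | zero => simp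
    | succ i ih =>
      calc SA ^ (i + 1) * J = SA ^ i * (SA * J) := by ring
        _ = SA ^ i * ((A.card : ZMod p) • J) := by rw [hSAJ]
        _ = (A.card : ZMod p) • (SA ^ i * J) := by rw [mul_smul_comm]
        _ = (A.card : ZMod p) • (((A.card : ZMod p) ^ i) • J) := by rw [ih]
        _ = ((A.card : ZMod p) ^ (i + 1)) • J := by rw [smul_smul, ← pow_succ']
  have h1 : SA * SB = J := by
    refine AddMonoidAlgebra.coeff_injective (Finsupp.ext fun t => ?_)
    rw [hSA, hSB, coeff_eq, hJt, h t, Nat.cast_one]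
  have hA0 : (A.card : ZMod p) ≠ 0 := by
    rw [Ne, ZMod.natCast_eq_zero_iff]
    exact hpm
  have hfrob : (∑ a ∈ A, (single ((((p * k : ℕ) : ℤ) * a : ℤ) : ZMod N) 1 : R)) = SA ^ p := by
    rw [hSA, sum_pow_char]
    refine Finset.sum_congr rfl (fun a _ => ?_)
    rw [single_pow, one_pow]
    congr 1
    rw [nsmul_eq_mul]
    push_cast
    ring
  have h2 : (∑ a ∈ A, (single ((((p * k : ℕ) : ℤ) * a : ℤ) : ZMod N) 1 : R)) * SB = J := by
    rw [hfrob]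
    have hps : p = (p - 1) + 1 := by
      have := hp.out.two_le; omega
    calc SA ^ p * SB = SA ^ (p - 1) * (SA * SB) := by
          rw [← mul_assoc, ← pow_succ, ← hps]
      _ = SA ^ (p - 1) * J := by rw [h1]
      _ = ((A.card : ZMod p) ^ (p - 1)) • J := hSApow _
      _ = J := by rw [ZMod.pow_card_sub_one_eq_one hA0, one_smul]
  have h3 : ∀ t, (cnt N A B (p * k) t : ZMod p) = 1 := by
    intro t
    rw [← coeff_eq N A B p (p * k) t, ← hSB, h2, hJt]
  have h4 : ∀ t, 1 ≤ cnt N A B (p * k) t := by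
    intro t
    rcases Nat.eq_zero_or_pos (cnt N A B (p * k) t) with h0 | h0
    · exfalso
      have h5 := h3 t
      rw [h0] at h5
      simp at h5
    · exact h0
  exact all_one _ h4 (by rw [cnt_sum, ← hN, ZMod.card])

private lemma cnt_mul (N : ℕ) [NeZero N] (A B : Finset ℤ) (hN : N = A.card * B.card)
    (h1 : ∀ t, cnt N A B 1 t = 1) :
    ∀ k : ℕ, 0 < k → Nat.Coprime k A.card → ∀ t, cnt N A B k t = 1 := by
  intro k
  induction k using Nat.strong_induction_on with
  | _ k ih =>
    intro hk hco
    rcases eq_or_lt_of_le (show 1 ≤ k from hk) with h | h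
    · rw [← h]; exact h1
    · set p := k.minFac with hpdef
      have hp : p.Prime := Nat.minFac_prime (by omega)
      haveI : Fact p.Prime := ⟨hp⟩
      obtain ⟨k', hk'⟩ := Nat.minFac_dvd k
      rw [← hpdef] at hk'
      have hppos := hp.two_le
      have hk'pos : 0 < k' := by
        rcases Nat.eq_zero_or_pos k' with h0 | h0
        · rw [h0, Nat.mul_zero] at hk'; omega
        · exact h0
      have hk'lt : k' < k := by
        have h2k := Nat.mul_le_mul_right k' hppos
        omega
      have hco' : Nat.Coprime k' A.card :=
        Nat.Coprime.coprime_dvd_left ⟨p, by rw [hk']; ring⟩ hco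
      have hpm : ¬ p ∣ A.card := by
        intro hd
        have h1' : p ∣ Nat.gcd k A.card := Nat.dvd_gcd (Nat.minFac_dvd k) hd
        have h2' : p ∣ 1 := hco ▸ h1'
        have := Nat.le_of_dvd one_pos h2'
        omega
      rw [hk']
      exact step N A B p k' hpm hN (ih k' hk'lt hk'pos hco')

private lemma engine (m n : ℕ) (hm : 0 < m) (hn : 0 < n) (hmn : Nat.Coprime m n)
    (A B : Finset ℤ) (hA : A.card = m) (hB : B.card = n)
    (hsum : ∀ r : ZMod (m * n), ∃! q : ℤ × ℤ,
      q.1 ∈ A ∧ q.2 ∈ B ∧ ((q.1 + q.2 : ℤ) : ZMod (m * n)) = r) :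
    ∀ r : ZMod n, ∃! b : ℤ, b ∈ B ∧ (b : ZMod n) = r := by
  classical
  haveI : NeZero (m * n) := ⟨by positivity⟩
  haveI : NeZero m := ⟨hm.ne'⟩
  haveI : NeZero n := ⟨hn.ne'⟩
  have h1 : ∀ t, cnt (m * n) A B 1 t = 1 := by
    intro t
    rw [cnt, Finset.card_eq_one]
    obtain ⟨q0, ⟨ha, hb, he⟩, hu⟩ := hsum t
    refine ⟨q0, ?_⟩
    ext q
    simp only [Finset.mem_filter, Finset.mem_product, Finset.mem_singleton]
    constructor
    · rintro ⟨⟨hqa, hqb⟩, hqe⟩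
      exact hu q ⟨hqa, hqb, by push_cast at hqe ⊢; linear_combination hqe⟩
    · rintro rfl
      exact ⟨⟨ha, hb⟩, by push_cast at he ⊢; linear_combination he⟩
  have hn' : ∀ t, cnt (m * n) A B n t = 1 :=
    cnt_mul (m * n) A B (by rw [hA, hB]) h1 n hn (by rw [hA]; exact hmn.symm)
  have H : ∀ t : ZMod (m * n), ∃! q : ℤ × ℤ, q.1 ∈ A ∧ q.2 ∈ B ∧
      (((n : ℤ) * q.1 : ℤ) : ZMod (m * n)) + ((q.2 : ℤ) : ZMod (m * n)) = t := by
    intro t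
    have h5 := hn' t
    rw [cnt, Finset.card_eq_one] at h5
    obtain ⟨q0, hq0⟩ := h5
    have hmem : q0 ∈ (A ×ˢ B).filter
        (fun q : ℤ × ℤ => (((n : ℤ) * q.1 : ℤ) : ZMod (m * n)) + ((q.2 : ℤ) : ZMod (m * n)) = t) := by
      rw [hq0]; exact Finset.mem_singleton_self q0
    simp only [Finset.mem_filter, Finset.mem_product] at hmem
    refine ⟨q0, ⟨hmem.1.1, hmem.1.2, hmem.2⟩, ?_⟩
    rintro q ⟨hqa, hqb, hqe⟩
    have hq : q ∈ (A ×ˢ B).filter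
        (fun q : ℤ × ℤ => (((n : ℤ) * q.1 : ℤ) : ZMod (m * n)) + ((q.2 : ℤ) : ZMod (m * n)) = t) := by
      simp only [Finset.mem_filter, Finset.mem_product]
      exact ⟨⟨hqa, hqb⟩, hqe⟩
    rw [hq0] at hq
    exact Finset.mem_singleton.mp hq
  have hAinj : ∀ a₁ ∈ A, ∀ a₂ ∈ A, (a₁ : ZMod m) = (a₂ : ZMod m) → a₁ = a₂ := by
    intro a₁ h₁ a₂ h₂ he
    obtain ⟨b0, hb0⟩ := Finset.card_pos.mp (by rw [hB]; exact hn : 0 < B.card)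
    have hd : (m : ℤ) ∣ (a₁ - a₂) :=
      Int.ModEq.dvd ((ZMod.intCast_eq_intCast_iff a₂ a₁ m).mp he.symm)
    obtain ⟨c, hc⟩ := hd
    obtain ⟨q0, _, hu⟩ := H ((((n : ℤ) * a₁ : ℤ) : ZMod (m * n)) + ((b0 : ℤ) : ZMod (m * n)))
    have e1 : ((a₁, b0) : ℤ × ℤ) = q0 := hu (a₁, b0) ⟨h₁, hb0, rfl⟩
    have key : (((n : ℤ) * a₂ : ℤ) : ZMod (m * n)) + ((b0 : ℤ) : ZMod (m * n)) =
        (((n : ℤ) * a₁ : ℤ) : ZMod (m * n)) + ((b0 : ℤ) : ZMod (m * n)) := by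
      have h5 : (((n : ℤ) * a₂ : ℤ) : ZMod (m * n)) = (((n : ℤ) * a₁ : ℤ) : ZMod (m * n)) := by
        rw [ZMod.intCast_eq_intCast_iff, Int.modEq_iff_dvd]
        refine ⟨c, ?_⟩
        push_cast
        linear_combination (n : ℤ) * hc
      rw [h5]
    have e2 : ((a₂, b0) : ℤ × ℤ) = q0 := hu (a₂, b0) ⟨h₂, hb0, key⟩
    have e3 := e1.trans e2.symm
    simpa using congrArg Prod.fst e3
  have hAsurj : ∀ x : ZMod m, ∃ a ∈ A, (a : ZMod m) = x := by
    have himg : (A.image (fun a : ℤ => (a : ZMod m))).card = m := by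
      rw [Finset.card_image_of_injOn (fun a₁ h₁ a₂ h₂ he => hAinj a₁ h₁ a₂ h₂ he), hA]
    have huniv : A.image (fun a : ℤ => (a : ZMod m)) = Finset.univ :=
      Finset.eq_univ_of_card _ (by rw [himg, ZMod.card])
    intro x
    have hx : x ∈ A.image (fun a : ℤ => (a : ZMod m)) := by
      rw [huniv]; exact Finset.mem_univ x
    simpa [Finset.mem_image] using hx
  have hBinj : ∀ b₁ ∈ B, ∀ b₂ ∈ B, (b₁ : ZMod n) = (b₂ : ZMod n) → b₁ = b₂ := by
    intro b₁ h₁ b₂ h₂ he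
    obtain ⟨a₁, ha₁⟩ := Finset.card_pos.mp (by rw [hA]; exact hm : 0 < A.card)
    have hd : (n : ℤ) ∣ (b₁ - b₂) :=
      Int.ModEq.dvd ((ZMod.intCast_eq_intCast_iff b₂ b₁ n).mp he.symm)
    obtain ⟨c, hc⟩ := hd
    obtain ⟨a₂, ha₂, he₂⟩ := hAsurj ((a₁ + c : ℤ) : ZMod m)
    have hd2 : (m : ℤ) ∣ ((a₁ + c) - a₂) :=
      Int.ModEq.dvd ((ZMod.intCast_eq_intCast_iff a₂ (a₁ + c) m).mp he₂)
    obtain ⟨d, hdd⟩ := hd2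
    obtain ⟨q0, _, hu⟩ := H ((((n : ℤ) * a₁ : ℤ) : ZMod (m * n)) + ((b₁ : ℤ) : ZMod (m * n)))
    have e1 : ((a₁, b₁) : ℤ × ℤ) = q0 := hu (a₁, b₁) ⟨ha₁, h₁, rfl⟩
    have key : (((n : ℤ) * a₂ : ℤ) : ZMod (m * n)) + ((b₂ : ℤ) : ZMod (m * n)) =
        (((n : ℤ) * a₁ : ℤ) : ZMod (m * n)) + ((b₁ : ℤ) : ZMod (m * n)) := by
      have h5 : ((n : ℤ) * a₂ + b₂) ≡ ((n : ℤ) * a₁ + b₁) [ZMOD ((m * n : ℕ) : ℤ)] := by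
        rw [Int.modEq_iff_dvd]
        refine ⟨d, ?_⟩
        push_cast
        linear_combination hc + (n : ℤ) * hdd
      have h6 := (ZMod.intCast_eq_intCast_iff _ _ (m * n)).mpr h5
      push_cast at h6 ⊢
      linear_combination h6
    have e2 : ((a₂, b₂) : ℤ × ℤ) = q0 := hu (a₂, b₂) ⟨ha₂, h₂, key⟩
    have e3 := e1.trans e2.symm
    simpa using congrArg Prod.snd e3
  intro r
  obtain ⟨⟨a0, b0⟩, ⟨ha0, hb0, he0⟩, _⟩ := H (((r.val : ℤ) : ZMod (m * n)))
  have hcast : (b0 : ZMod n) = r := by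
    have h5 : ((n : ℤ) * a0 + b0) ≡ (r.val : ℤ) [ZMOD ((m * n : ℕ) : ℤ)] := by
      rw [← ZMod.intCast_eq_intCast_iff]
      push_cast at he0 ⊢
      linear_combination he0
    have h6 : ((n : ℤ) * a0 + b0) ≡ (r.val : ℤ) [ZMOD (n : ℤ)] :=
      h5.of_dvd (by push_cast; exact ⟨m, by ring⟩)
    have h7 := (ZMod.intCast_eq_intCast_iff _ _ n).mpr h6
    push_cast at h7
    rw [ZMod.natCast_self, zero_mul, zero_add] at h7
    rw [h7]
    simp [ZMod.natCast_val, ZMod.cast_id]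
  exact ⟨b0, ⟨hb0, hcast⟩, fun b1 ⟨hb1, hr1⟩ => hBinj b1 hb1 b0 hb0 (by rw [hr1, hcast])⟩

theorem stmt_10 (m n : ℕ) (hm : 0 < m) (hn : 0 < n) (hmn : Nat.Coprime m n)
    (A B : Finset ℤ) (hA : A.card = m) (hB : B.card = n)
    (hsum : ∀ r : ZMod (m * n), ∃! p : ℤ × ℤ,
      p.1 ∈ A ∧ p.2 ∈ B ∧ ((p.1 + p.2 : ℤ) : ZMod (m * n)) = r) :
    (∀ r : ZMod m, ∃! a : ℤ, a ∈ A ∧ (a : ZMod m) = r) ∧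
    (∀ r : ZMod n, ∃! b : ℤ, b ∈ B ∧ (b : ZMod n) = r) := by
  constructor
  · have hswap : ∀ r : ZMod (m * n), ∃! q : ℤ × ℤ,
        q.1 ∈ B ∧ q.2 ∈ A ∧ ((q.1 + q.2 : ℤ) : ZMod (m * n)) = r := by
      intro r
      obtain ⟨⟨a, b⟩, ⟨ha, hb, he⟩, hu⟩ := hsum r
      refine ⟨(b, a), ⟨hb, ha, by rw [add_comm]; exact he⟩, ?_⟩
      rintro ⟨b', a'⟩ ⟨hb', ha', he'⟩
      have h9 := hu (a', b') ⟨ha', hb', by rw [add_comm]; exact he'⟩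
      rw [Prod.mk.injEq] at h9 ⊢
      exact ⟨h9.2, h9.1⟩
    have hswap' : ∀ r : ZMod (n * m), ∃! q : ℤ × ℤ,
        q.1 ∈ B ∧ q.2 ∈ A ∧ ((q.1 + q.2 : ℤ) : ZMod (n * m)) = r := by
      rw [Nat.mul_comm n m]; exact hswap
    exact engine n m hn hm hmn.symm B A hB hA hswap'
  · exact engine m n hm hn hmn A B hA hB hsum
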